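/- If t₀ ∈ ℝ satisfies ψ(t₀) ≥ t₀, then ψ(t₀ + ε) > ψ(t₀) for every ε > 0. -/
import Mathlib

/-- For `ψ(t) = (A + t·θ(t))/(B + θ(t))` with `B > 0` and `θ`
nonincreasing and positive, if `ψ(t₀) ≥ t₀` then `ψ(t₀ + ε) > ψ(t₀)` for every
`ε > 0`. -/
theorem stmt_14
    (A B : ℝ) (hB : 0 < B)
    (θ : ℝ → ℝ) (hθanti : Antitone θ) (hθpos : ∀ t, 0 < θ t)
    (ψ : ℝ → ℝ) (hψ : ∀ t, ψ t = (A + t * θ t) / (B + θ t))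
    (t₀ : ℝ) (h : t₀ ≤ ψ t₀) :
    ∀ ε : ℝ, 0 < ε → ψ t₀ < ψ (t₀ + ε) := by
  intro ε hε
  have hθ0 := hθpos t₀
  have hθ1 := hθpos (t₀ + ε)
  have hle : θ (t₀ + ε) ≤ θ t₀ := hθanti (by linarith)
  have hd0 : 0 < B + θ t₀ := by linarith
  have hd1 : 0 < B + θ (t₀ + ε) := by linarith
  rw [hψ t₀] at h ⊢
  rw [hψ (t₀ + ε)]
  have hA : t₀ * B ≤ A := by
    rw [le_div_iff₀ hd0] at h
    nlinarith
  rw [div_lt_div_iff₀ hd0 hd1]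
  nlinarith [mul_pos (mul_pos hε hθ1) hd0, mul_nonneg (sub_nonneg.2 hA) (sub_nonneg.2 hle)]
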